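/- Existence of traveling waves: assume 0 < φ ≤ 1, 0 < μ ≤ ψ, ω > 0, at least one of φ < 1 or μ < ψ, and let c satisfy φ/(φ+ψ) < c < 1/(1+μ). Let R* > 0 be the unique zero of K. Then for every R⁺ > R* there exist R⁻ with 0 ≤ R⁻ < R* and continuously differentiable functions R, ρ : ℝ → ℝ such that ρ(ξ) > 0 and R(ξ) > 0 for all ξ, the pair satisfies the traveling-wave ODE system R'(ξ) = ((1−c)/c)·ρ(ξ)·R(ξ) and ρ'(ξ) = K(R(ξ))·ρ(ξ) on ℝ, and (R(ξ), ρ(ξ)) → (R⁻, 0) as ξ → −∞ while (R(ξ), ρ(ξ)) → (R⁺, 0) as ξ → +∞. -/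

import Mathlib

open Real Filter Set MeasureTheory intervalIntegral

lemma hetero (a b : ℝ) (hab : a < b) (F : ℝ → ℝ)
    (hFc : ∀ r ∈ Ioo a b, ContinuousAt F r)
    (hFpos : ∀ r ∈ Ioo a b, 0 < F r)
    (L : ℝ) (hL : 0 < L)
    (hFla : ∀ r ∈ Ioo a b, F r ≤ L * (r - a))
    (hFlb : ∀ r ∈ Ioo a b, F r ≤ L * (b - r)) :
    ∃ R : ℝ → ℝ, (∀ t, R t ∈ Ioo a b) ∧ (∀ t, HasDerivAt R (F (R t)) t) ∧
      Continuous R ∧ Tendsto R atBot (nhds a) ∧ Tendsto R atTop (nhds b) := by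
  set m : ℝ := (a + b) / 2 with hm_def
  have hm : m ∈ Ioo a b := ⟨by simp only [hm_def]; linarith, by simp only [hm_def]; linarith⟩
  set G : ℝ → ℝ := fun r => (F r)⁻¹ with hG_def
  have hGc : ContinuousOn G (Ioo a b) := fun r hr =>
    (((hFc r hr).inv₀ (hFpos r hr).ne')).continuousWithinAt
  have hGpos : ∀ r ∈ Ioo a b, 0 < G r := fun r hr => inv_pos.2 (hFpos r hr)
  have hint : ∀ x ∈ Ioo a b, ∀ y ∈ Ioo a b, IntervalIntegrable G volume x y := by
    intro x hx y hy
    exact (hGc.mono (Set.ordConnected_Ioo.uIcc_subset hx hy)).intervalIntegrable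
  set ξ : ℝ → ℝ := fun r => ∫ s in m..r, G s with hξ_def
  have hξd : ∀ r ∈ Ioo a b, HasDerivAt ξ (G r) r := by
    intro r hr
    exact integral_hasDerivAt_right (hint m hm r hr)
      (hGc.stronglyMeasurableAtFilter isOpen_Ioo r hr) (hGc.continuousAt (isOpen_Ioo.mem_nhds hr))
  have hξc : ContinuousOn ξ (Ioo a b) := fun r hr => ((hξd r hr).continuousAt).continuousWithinAt
  have hξmono : ∀ x ∈ Ioo a b, ∀ y ∈ Ioo a b, x < y → ξ x < ξ y := by
    intro x hx y hy hxy
    have hpos : 0 < ∫ s in x..y, G s := by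
      refine intervalIntegral_pos_of_pos_on (hint x hx y hy) (fun s hs => ?_) hxy
      exact hGpos s ⟨lt_trans hx.1 hs.1, lt_trans hs.2 hy.2⟩
    have hsum : ξ x + ∫ s in x..y, G s = ξ y :=
      integral_add_adjacent_intervals (hint m hm x hx) (hint x hx y hy)
    linarith
  -- unbounded above
  have htop : ∀ t : ℝ, ∃ r ∈ Ioo m b, t < ξ r := by
    intro t
    set ε : ℝ := min ((b - m) / 2) (Real.exp (Real.log (b - m) - L * t - 1)) with hε_def
    have hbm : 0 < b - m := by linarith [hm.2]
    have hε0 : 0 < ε := lt_min (by linarith) (Real.exp_pos _)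
    have hεlt : ε < b - m := lt_of_le_of_lt (min_le_left _ _) (by linarith)
    set r : ℝ := b - ε with hr_def
    have hr : r ∈ Ioo m b := ⟨by simp only [hr_def]; linarith, by simp only [hr_def]; linarith⟩
    have hra : r ∈ Ioo a b := ⟨lt_trans hm.1 hr.1, hr.2⟩
    refine ⟨r, hr, ?_⟩
    -- lower bound integrand
    set H : ℝ → ℝ := fun s => (L * (b - s))⁻¹ with hH_def
    have hHc : ContinuousOn H (uIcc m r) := by
      have hsub : uIcc m r ⊆ Iio b := fun s hs => by
        have := Set.ordConnected_Ioo.uIcc_subset hm hra hs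
        exact this.2
      refine ContinuousOn.inv₀ (by fun_prop) fun s hs => ?_
      have hsb : s < b := hsub hs
      exact (mul_pos hL (by linarith)).ne'
    have hHint : IntervalIntegrable H volume m r := hHc.intervalIntegrable
    have hmono : ∫ s in m..r, H s ≤ ∫ s in m..r, G s := by
      refine integral_mono_on hr.1.le hHint (hint m hm r hra) fun s hs => ?_
      have hs' : s ∈ Ioo a b := ⟨lt_of_lt_of_le hm.1 hs.1, lt_of_le_of_lt hs.2 hr.2⟩
      have h1 : F s ≤ L * (b - s) := hFlb s hs'
      exact inv_anti₀ (hFpos s hs') h1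
    have hHval : ∫ s in m..r, H s = (1 / L) * (Real.log (b - m) - Real.log (b - r)) := by
      have hderiv : ∀ s ∈ uIcc m r, HasDerivAt (fun u => -(1 / L) * Real.log (b - u)) (H s) s := by
        intro s hs
        have hsb : s < b := (Set.ordConnected_Ioo.uIcc_subset hm hra hs).2
        have h1 : HasDerivAt (fun u : ℝ => b - u) (-1) s := by
          simpa using (hasDerivAt_id s).const_sub b
        have h2 : HasDerivAt (fun u => Real.log (b - u)) ((b - s)⁻¹ * -1) s :=
          (Real.hasDerivAt_log (by linarith)).comp s h1
        have h3 := h2.const_mul (-(1 / L))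
        refine h3.congr_deriv ?_
        show _ = (L * (b - s))⁻¹
        rw [mul_inv]
        field_simp
      rw [integral_eq_sub_of_hasDerivAt hderiv hHint]
      simp only [hr_def]
      ring
    have hεlog : Real.log ε < Real.log (b - m) - L * t := by
      have h1 : Real.log ε ≤ Real.log (b - m) - L * t - 1 := by
        calc Real.log ε ≤ Real.log (Real.exp (Real.log (b - m) - L * t - 1)) :=
              Real.log_le_log hε0 (min_le_right _ _)
          _ = _ := Real.log_exp _
      linarith
    have : (1 / L) * (Real.log (b - m) - Real.log (b - r)) > t := by
      have hbr : b - r = ε := by simp [hr_def]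
      rw [hbr, gt_iff_lt, one_div, inv_mul_eq_div, lt_div_iff₀ hL]
      nlinarith [hεlog]
    calc t < (1 / L) * (Real.log (b - m) - Real.log (b - r)) := this
      _ ≤ ∫ s in m..r, G s := by rw [← hHval]; exact hmono
  -- unbounded below
  have hbot : ∀ t : ℝ, ∃ r ∈ Ioo a m, ξ r < t := by
    intro t
    set ε : ℝ := min ((m - a) / 2) (Real.exp (Real.log (m - a) + L * t - 1)) with hε_def
    have hma : 0 < m - a := by linarith [hm.1]
    have hε0 : 0 < ε := lt_min (by linarith) (Real.exp_pos _)
    have hεlt : ε < m - a := lt_of_le_of_lt (min_le_left _ _) (by linarith)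
    set r : ℝ := a + ε with hr_def
    have hr : r ∈ Ioo a m := ⟨by simp only [hr_def]; linarith, by simp only [hr_def]; linarith⟩
    have hra : r ∈ Ioo a b := ⟨hr.1, lt_trans hr.2 hm.2⟩
    refine ⟨r, hr, ?_⟩
    set H : ℝ → ℝ := fun s => (L * (s - a))⁻¹ with hH_def
    have hHc : ContinuousOn H (uIcc r m) := by
      refine ContinuousOn.inv₀ (by fun_prop) fun s hs => ?_
      have hsa : a < s := (Set.ordConnected_Ioo.uIcc_subset hra hm hs).1
      exact (mul_pos hL (by linarith)).ne'
    have hHint : IntervalIntegrable H volume r m := hHc.intervalIntegrable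
    have hmono : ∫ s in r..m, H s ≤ ∫ s in r..m, G s := by
      refine integral_mono_on hr.2.le hHint (hint r hra m hm) fun s hs => ?_
      have hs' : s ∈ Ioo a b := ⟨lt_of_lt_of_le hr.1 hs.1, lt_of_le_of_lt hs.2 hm.2⟩
      exact inv_anti₀ (hFpos s hs') (hFla s hs')
    have hHval : ∫ s in r..m, H s = (1 / L) * (Real.log (m - a) - Real.log (r - a)) := by
      have hderiv : ∀ s ∈ uIcc r m, HasDerivAt (fun u => (1 / L) * Real.log (u - a)) (H s) s := by
        intro s hs
        have hsa : a < s := (Set.ordConnected_Ioo.uIcc_subset hra hm hs).1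
        have h1 : HasDerivAt (fun u : ℝ => u - a) 1 s := by
          simpa using (hasDerivAt_id s).sub_const a
        have h2 : HasDerivAt (fun u => Real.log (u - a)) ((s - a)⁻¹ * 1) s :=
          (Real.hasDerivAt_log (by linarith)).comp s h1
        have h3 := h2.const_mul (1 / L)
        refine h3.congr_deriv ?_
        show _ = (L * (s - a))⁻¹
        rw [mul_inv]
        field_simp
      rw [integral_eq_sub_of_hasDerivAt hderiv hHint]
      ring
    have hεlog : Real.log ε < Real.log (m - a) + L * t := by
      have h1 : Real.log ε ≤ Real.log (m - a) + L * t - 1 := by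
        calc Real.log ε ≤ Real.log (Real.exp (Real.log (m - a) + L * t - 1)) :=
              Real.log_le_log hε0 (min_le_right _ _)
          _ = _ := Real.log_exp _
      linarith
    have hξr : ξ r = - ∫ s in r..m, G s := by
      simp only [hξ_def]
      rw [integral_symm]
    have hkey : (1 / L) * (Real.log (m - a) - Real.log (r - a)) > -t := by
      have hra' : r - a = ε := by simp [hr_def]
      rw [hra', gt_iff_lt, one_div, inv_mul_eq_div, lt_div_iff₀ hL]
      nlinarith [hεlog]
    have : ∫ s in r..m, G s > -t := lt_of_lt_of_le hkey (hHval ▸ hmono)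
    rw [hξr]; linarith
  -- surjectivity
  have hsurj : ∀ t : ℝ, ∃ r ∈ Ioo a b, ξ r = t := by
    intro t
    obtain ⟨rhi, hrhi, hthi⟩ := htop t
    obtain ⟨rlo, hrlo, htlo⟩ := hbot t
    have hrlo' : rlo ∈ Ioo a b := ⟨hrlo.1, lt_trans hrlo.2 hm.2⟩
    have hrhi' : rhi ∈ Ioo a b := ⟨lt_trans hm.1 hrhi.1, hrhi.2⟩
    have hlohi : rlo < rhi := lt_trans hrlo.2 hrhi.1
    have hIcc : Icc rlo rhi ⊆ Ioo a b := Set.ordConnected_Ioo.out hrlo' hrhi'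
    have hIVT := intermediate_value_Ioo hlohi.le (hξc.mono hIcc)
    have ht : t ∈ Ioo (ξ rlo) (ξ rhi) := ⟨htlo, hthi⟩
    obtain ⟨r, hrmem, hrval⟩ := hIVT ht
    exact ⟨r, hIcc (Ioo_subset_Icc_self hrmem), hrval⟩
  -- order isomorphism
  set e : Ioo a b → ℝ := fun x => ξ x.1 with he_def
  have heS : StrictMono e := fun x y h => hξmono x.1 x.2 y.1 y.2 h
  have heSurj : Function.Surjective e := by
    intro t
    obtain ⟨r, hr, hrt⟩ := hsurj t
    exact ⟨⟨r, hr⟩, hrt⟩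
  set iso := StrictMono.orderIsoOfSurjective e heS heSurj with hiso_def
  set R : ℝ → ℝ := fun t => (iso.symm t : ℝ) with hR_def
  have hRmem : ∀ t, R t ∈ Ioo a b := fun t => (iso.symm t).2
  have hlinv : ∀ t, ξ (R t) = t := by
    intro t
    have h1 : e (iso.symm t) = t := by
      rw [← StrictMono.coe_orderIsoOfSurjective e heS heSurj]
      exact iso.apply_symm_apply t
    exact h1
  have hRc : Continuous R := by
    have h1 : Continuous (iso.toHomeomorph.symm) := Homeomorph.continuous _
    exact continuous_subtype_val.comp h1
  have hRd : ∀ t, HasDerivAt R (F (R t)) t := by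
    intro t
    have h1 : HasDerivAt ξ (G (R t)) (R t) := hξd (R t) (hRmem t)
    have h2 : G (R t) ≠ 0 := (hGpos _ (hRmem t)).ne'
    have h3 : ∀ᶠ y in nhds t, ξ (R y) = y := Eventually.of_forall hlinv
    have h4 := HasDerivAt.of_local_left_inverse hRc.continuousAt h1 h2 h3
    simpa [hG_def] using h4
  have hRmono : Monotone R := by
    intro s t hst
    rcases lt_or_eq_of_le hst with h | h
    · exact le_of_lt (iso.symm.strictMono h)
    · simp [h]
  have hrange : Set.range R = Ioo a b := by
    ext x
    constructor
    · rintro ⟨t, rfl⟩; exact hRmem t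
    · intro hx
      exact ⟨iso ⟨x, hx⟩, by simp only [hR_def, OrderIso.symm_apply_apply]⟩
  have htopR : Tendsto R atTop (nhds b) := by
    have hbdd : BddAbove (Set.range R) := ⟨b, by rintro x ⟨t, rfl⟩; exact (hRmem t).2.le⟩
    have := tendsto_atTop_ciSup hRmono hbdd
    have heq : (⨆ t, R t) = b := by rw [← sSup_range, hrange, csSup_Ioo hab]
    rwa [heq] at this
  have hbotR : Tendsto R atBot (nhds a) := by
    have hbdd : BddBelow (Set.range R) := ⟨a, by rintro x ⟨t, rfl⟩; exact (hRmem t).1.le⟩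
    have := tendsto_atBot_ciInf hRmono hbdd
    have heq : (⨅ t, R t) = a := by rw [← sInf_range, hrange, csInf_Ioo hab]
    rwa [heq] at this
  exact ⟨R, hRmem, hRd, hRc, hbotR, htopR⟩


/-- Nondimensional stationary-to-moving switching rate. -/
noncomputable def ksm (φ R : ℝ) : ℝ := φ - (φ - 1) * Real.exp (-R)

/-- Nondimensional moving-to-stationary switching rate. -/
noncomputable def kms (ψ μ ω R : ℝ) : ℝ := ψ - (ψ - μ) * Real.exp (-ω * R)

/-- Nullcline function K(R) = k_sm(R)/c − k_ms(R)/(1−c). -/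
noncomputable def Kfun (φ ψ μ ω c R : ℝ) : ℝ := ksm φ R / c - kms ψ μ ω R / (1 - c)


lemma Kfun_hasDerivAt (φ ψ μ ω c x : ℝ) :
    HasDerivAt (Kfun φ ψ μ ω c)
      ((φ - 1) * Real.exp (-x) / c - ω * (ψ - μ) * Real.exp (-ω * x) / (1 - c)) x := by
  have h1 : HasDerivAt (fun x => ksm φ x) ((φ - 1) * Real.exp (-x)) x := by
    have he : HasDerivAt (fun x : ℝ => Real.exp (-x)) (Real.exp (-x) * (-1)) x :=
      ((hasDerivAt_id x).neg).exp
    have := (he.const_mul (φ - 1)).const_sub φ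
    show HasDerivAt (fun x => φ - (φ - 1) * Real.exp (-x)) _ x
    refine this.congr_deriv ?_
    ring
  have h2 : HasDerivAt (fun x => kms ψ μ ω x) (ω * (ψ - μ) * Real.exp (-ω * x)) x := by
    have hin : HasDerivAt (fun x : ℝ => -ω * x) (-ω) x := by
      simpa using (hasDerivAt_id x).const_mul (-ω)
    have he : HasDerivAt (fun x : ℝ => Real.exp (-ω * x)) (Real.exp (-ω * x) * (-ω)) x :=
      hin.exp
    have := (he.const_mul (ψ - μ)).const_sub ψ
    show HasDerivAt (fun x => ψ - (ψ - μ) * Real.exp (-ω * x)) _ x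
    refine this.congr_deriv ?_
    ring
  have := (h1.div_const c).sub (h2.div_const (1 - c))
  exact this

lemma Kfun_strictAnti (φ ψ μ ω c : ℝ)
    (hφ1 : φ ≤ 1) (hμψ : μ ≤ ψ) (hω : 0 < ω) (hne : φ < 1 ∨ μ < ψ)
    (hc0 : 0 < c) (hc1 : c < 1) : StrictAnti (Kfun φ ψ μ ω c) := by
  refine strictAnti_of_deriv_neg fun x => ?_
  rw [(Kfun_hasDerivAt φ ψ μ ω c x).deriv]
  have h1c : (0:ℝ) < 1 - c := by linarith
  have hA : (φ - 1) * Real.exp (-x) / c ≤ 0 := by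
    apply div_nonpos_of_nonpos_of_nonneg _ hc0.le
    exact mul_nonpos_of_nonpos_of_nonneg (by linarith) (Real.exp_pos _).le
  have hB : 0 ≤ ω * (ψ - μ) * Real.exp (-ω * x) / (1 - c) :=
    div_nonneg (mul_nonneg (mul_nonneg hω.le (by linarith)) (Real.exp_pos _).le) h1c.le
  rcases hne with h | h
  · have : (φ - 1) * Real.exp (-x) / c < 0 :=
      div_neg_of_neg_of_pos (mul_neg_of_neg_of_pos (by linarith) (Real.exp_pos _)) hc0
    linarith
  · have : 0 < ω * (ψ - μ) * Real.exp (-ω * x) / (1 - c) :=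
      div_pos (mul_pos (mul_pos hω (by linarith)) (Real.exp_pos _)) h1c
    linarith


/-- Existence of traveling waves: for every R⁺ > R* (R* the unique zero of K) there is a
heteroclinic solution of the traveling-wave ODE system connecting (R⁻, 0) to (R⁺, 0). -/
theorem traveling_wave_exists (φ ψ μ ω c Rstar : ℝ)
    (hφ0 : 0 < φ) (hφ1 : φ ≤ 1) (hμ0 : 0 < μ) (hμψ : μ ≤ ψ) (hω : 0 < ω)
    (hne : φ < 1 ∨ μ < ψ)
    (hclow : φ / (φ + ψ) < c) (hchigh : c < 1 / (1 + μ))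
    (hRstar_pos : 0 < Rstar) (hRstar_zero : Kfun φ ψ μ ω c Rstar = 0)
    (hRstar_unique : ∀ R' : ℝ, 0 < R' → Kfun φ ψ μ ω c R' = 0 → R' = Rstar) :
    ∀ Rplus : ℝ, Rstar < Rplus →
      ∃ Rminus : ℝ, 0 ≤ Rminus ∧ Rminus < Rstar ∧
        ∃ R ρ : ℝ → ℝ, ContDiff ℝ 1 R ∧ ContDiff ℝ 1 ρ ∧
          (∀ ξ : ℝ, 0 < ρ ξ) ∧ (∀ ξ : ℝ, 0 < R ξ) ∧
          (∀ ξ : ℝ, deriv R ξ = ((1 - c) / c) * ρ ξ * R ξ) ∧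
          (∀ ξ : ℝ, deriv ρ ξ = Kfun φ ψ μ ω c (R ξ) * ρ ξ) ∧
          Tendsto R atBot (nhds Rminus) ∧ Tendsto ρ atBot (nhds 0) ∧
          Tendsto R atTop (nhds Rplus) ∧ Tendsto ρ atTop (nhds 0) := by
  intro Rplus hRp
  set K := Kfun φ ψ μ ω c with hKdef
  have hψ0 : 0 < ψ := lt_of_lt_of_le hμ0 hμψ
  have hc0 : 0 < c := lt_trans (div_pos hφ0 (by linarith)) hclow
  have hc1 : c < 1 := by
    have h1 : 1 / (1 + μ) < 1 := by rw [div_lt_one (by linarith)]; linarith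
    linarith
  have h1c : (0:ℝ) < 1 - c := by linarith
  have hcne : c ≠ 0 := hc0.ne'
  have h1cne : (1:ℝ) - c ≠ 0 := h1c.ne'
  have hcpos : 0 < c / (1 - c) := div_pos hc0 h1c
  have hKanti : StrictAnti K := Kfun_strictAnti φ ψ μ ω c hφ1 hμψ hω hne hc0 hc1
  have hKcont : Continuous K :=
    continuous_iff_continuousAt.2 fun x => (Kfun_hasDerivAt φ ψ μ ω c x).continuousAt
  have hKpos : ∀ r, r < Rstar → 0 < K r := by
    intro r h
    have := hKanti h
    rw [hRstar_zero] at this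
    exact this
  have hKneg : ∀ r, Rstar < r → K r < 0 := by
    intro r h
    have := hKanti h
    rw [hRstar_zero] at this
    exact this
  have hRp0 : 0 < Rplus := lt_trans hRstar_pos hRp
  -- the first-integral function
  set g : ℝ → ℝ := fun s => K s / s with hgdef
  have hgc : ContinuousOn g (Ioi 0) :=
    (hKcont.continuousOn).div continuousOn_id fun s hs => ne_of_gt hs
  have hgint : ∀ x y : ℝ, 0 < x → 0 < y → IntervalIntegrable g volume x y := by
    intro x y hx hy
    exact (hgc.mono (Set.ordConnected_Ioi.uIcc_subset hx hy)).intervalIntegrable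
  set ρh : ℝ → ℝ := fun r => (c / (1 - c)) * ∫ s in Rplus..r, g s with hρhdef
  have hρhd : ∀ r : ℝ, 0 < r → HasDerivAt ρh ((c / (1 - c)) * g r) r := by
    intro r hr
    exact (integral_hasDerivAt_right (hgint Rplus r hRp0 hr)
      (hgc.stronglyMeasurableAtFilter isOpen_Ioi r hr)
      (hgc.continuousAt (isOpen_Ioi.mem_nhds hr))).const_mul (c / (1 - c))
  have hρcOn : ContinuousOn ρh (Ioi 0) := fun r hr =>
    (hρhd r hr).continuousAt.continuousWithinAt
  have hρRplus : ρh Rplus = 0 := by simp [hρhdef]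
  have hdiff : ∀ x y : ℝ, 0 < x → 0 < y →
      ρh y - ρh x = (c / (1 - c)) * ∫ s in x..y, g s := by
    intro x y hx hy
    have hadd := integral_add_adjacent_intervals (hgint Rplus x hRp0 hx) (hgint x y hx hy)
    simp only [hρhdef]
    rw [← hadd]
    ring
  -- ρh is positive at Rstar
  have hρRstar : 0 < ρh Rstar := by
    have hIneg : ∫ s in Rstar..Rplus, g s < 0 := by
      have hpos : 0 < ∫ s in Rstar..Rplus, (-(g s)) := by
        refine intervalIntegral_pos_of_pos_on ((hgint Rstar Rplus hRstar_pos hRp0).neg)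
          (fun s hs => ?_) hRp
        have hs0 : 0 < s := lt_trans hRstar_pos hs.1
        have hKs : K s < 0 := hKneg s hs.1
        simp only [hgdef]
        exact neg_pos.2 (div_neg_of_neg_of_pos hKs hs0)
      rw [intervalIntegral.integral_neg] at hpos
      linarith
    have heq := hdiff Rstar Rplus hRstar_pos hRp0
    have : (c / (1 - c)) * ∫ s in Rstar..Rplus, g s < 0 :=
      mul_neg_of_pos_of_neg hcpos hIneg
    linarith [hρRplus]
  -- ρh is negative for small R
  set κ := K (Rstar / 2) with hκdef
  have hhalf : Rstar / 2 < Rstar := by linarith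
  have hhalf0 : 0 < Rstar / 2 := by linarith
  have hκ : 0 < κ := hKpos _ hhalf
  set C := ∫ s in (Rstar / 2)..Rplus, g s with hCdef
  set R0 := (Rstar / 2) * Real.exp (-((|C| + 1) / κ)) with hR0def
  have hR00 : 0 < R0 := mul_pos hhalf0 (Real.exp_pos _)
  have hR0lt : R0 < Rstar / 2 := by
    have he1 : Real.exp (-((|C| + 1) / κ)) < 1 := by
      rw [Real.exp_lt_one_iff]
      have : 0 < (|C| + 1) / κ := div_pos (by positivity) hκ
      linarith
    calc R0 < (Rstar / 2) * 1 := by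
          exact mul_lt_mul_of_pos_left he1 hhalf0
      _ = Rstar / 2 := mul_one _
  have hlogR0 : Real.log R0 = Real.log (Rstar / 2) - (|C| + 1) / κ := by
    rw [hR0def, Real.log_mul hhalf0.ne' (Real.exp_pos _).ne', Real.log_exp]
    ring
  have hIlow : κ * (Real.log (Rstar / 2) - Real.log R0) ≤ ∫ s in R0..(Rstar / 2), g s := by
    set H : ℝ → ℝ := fun s => κ / s with hHdef
    have hsubI : uIcc R0 (Rstar / 2) ⊆ Ioi 0 :=
      Set.ordConnected_Ioi.uIcc_subset hR00 hhalf0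
    have hHc : ContinuousOn H (uIcc R0 (Rstar / 2)) := by
      refine continuousOn_const.div continuousOn_id fun s hs => ?_
      exact ne_of_gt (hsubI hs)
    have hHint : IntervalIntegrable H volume R0 (Rstar / 2) := hHc.intervalIntegrable
    have hHval : ∫ s in R0..(Rstar / 2), H s
        = κ * Real.log (Rstar / 2) - κ * Real.log R0 := by
      have hderiv : ∀ s ∈ uIcc R0 (Rstar / 2),
          HasDerivAt (fun u => κ * Real.log u) (H s) s := by
        intro s hs
        have hs0 : 0 < s := hsubI hs
        have := (Real.hasDerivAt_log hs0.ne').const_mul κ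
        simpa [hHdef, div_eq_mul_inv] using this
      rw [integral_eq_sub_of_hasDerivAt hderiv hHint]
    have hmono : ∫ s in R0..(Rstar / 2), H s ≤ ∫ s in R0..(Rstar / 2), g s := by
      refine integral_mono_on hR0lt.le hHint (hgint _ _ hR00 hhalf0) fun s hs => ?_
      have hs0 : 0 < s := lt_of_lt_of_le hR00 hs.1
      have hKge : κ ≤ K s := hKanti.antitone hs.2
      simp only [hHdef, hgdef]
      exact (div_le_div_iff_of_pos_right hs0).2 hKge
    calc κ * (Real.log (Rstar / 2) - Real.log R0)
        = ∫ s in R0..(Rstar / 2), H s := by rw [hHval]; ring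
      _ ≤ _ := hmono
  have hρR0 : ρh R0 < 0 := by
    have hadd : (∫ s in R0..(Rstar / 2), g s) + C = ∫ s in R0..Rplus, g s :=
      integral_add_adjacent_intervals (hgint _ _ hR00 hhalf0) (hgint _ _ hhalf0 hRp0)
    have hval : κ * (Real.log (Rstar / 2) - Real.log R0) = |C| + 1 := by
      rw [hlogR0]
      field_simp
      ring
    have hbig : 1 ≤ ∫ s in R0..Rplus, g s := by
      have h1 : |C| + 1 ≤ ∫ s in R0..(Rstar / 2), g s := hval ▸ hIlow
      have h2 : -|C| ≤ C := neg_abs_le C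
      linarith
    have heq : ρh R0 = -((c / (1 - c)) * ∫ s in R0..Rplus, g s) := by
      simp only [hρhdef]
      rw [integral_symm]
      ring
    have : c / (1 - c) * 1 ≤ (c / (1 - c)) * ∫ s in R0..Rplus, g s :=
      mul_le_mul_of_nonneg_left hbig hcpos.le
    rw [heq]
    nlinarith
  -- obtain Rminus by the intermediate value theorem
  have hcontIcc : ContinuousOn ρh (Icc R0 Rstar) :=
    hρcOn.mono fun x hx => lt_of_lt_of_le hR00 hx.1
  have hR0Rstar : R0 ≤ Rstar := le_of_lt (lt_trans hR0lt hhalf)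
  obtain ⟨Rminus, hRmem', hRmzero⟩ :=
    intermediate_value_Ioo hR0Rstar hcontIcc (⟨hρR0, hρRstar⟩ : (0:ℝ) ∈ Ioo (ρh R0) (ρh Rstar))
  have hRm0 : 0 < Rminus := lt_trans hR00 hRmem'.1
  have hRmlt : Rminus < Rstar := hRmem'.2
  have hminusplus : Rminus < Rplus := lt_trans hRmlt hRp
  -- positivity of ρh on (Rminus, Rplus)
  have hρpos' : ∀ r ∈ Ioo Rminus Rplus, 0 < ρh r := by
    intro r hr
    have hr0 : 0 < r := lt_trans hRm0 hr.1
    rcases le_or_gt r Rstar with hcase | hcase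
    · have hdiffeq := hdiff Rminus r hRm0 hr0
      have hI : 0 < ∫ s in Rminus..r, g s := by
        refine intervalIntegral_pos_of_pos_on (hgint _ _ hRm0 hr0) (fun s hs => ?_) hr.1
        have hs0 : 0 < s := lt_trans hRm0 hs.1
        exact div_pos (hKpos s (lt_of_lt_of_le hs.2 hcase)) hs0
      have := mul_pos hcpos hI
      rw [hRmzero] at hdiffeq
      linarith
    · have hdiffeq := hdiff r Rplus hr0 hRp0
      have hI : ∫ s in r..Rplus, g s < 0 := by
        have hpos : 0 < ∫ s in r..Rplus, (-(g s)) := by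
          refine intervalIntegral_pos_of_pos_on ((hgint r Rplus hr0 hRp0).neg)
            (fun s hs => ?_) hr.2
          have hs0 : 0 < s := lt_trans hr0 hs.1
          have hKs : K s < 0 := hKneg s (lt_trans hcase hs.1)
          simp only [hgdef]
          exact neg_pos.2 (div_neg_of_neg_of_pos hKs hs0)
        rw [intervalIntegral.integral_neg] at hpos
        linarith
      have h2 : (c / (1 - c)) * ∫ s in r..Rplus, g s < 0 :=
        mul_neg_of_pos_of_neg hcpos hI
      rw [hρRplus] at hdiffeq
      linarith
  -- the vector field of the reduced scalar equation
  set F : ℝ → ℝ := fun r => ((1 - c) / c) * (ρh r * r) with hFdef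
  set F' : ℝ → ℝ := fun r => ((1 - c) / c) * ((c / (1 - c)) * g r * r + ρh r) with hF'def
  have hFd : ∀ r : ℝ, 0 < r → HasDerivAt F (F' r) r := by
    intro r hr
    have h1 := ((hρhd r hr).mul (hasDerivAt_id r)).const_mul ((1 - c) / c)
    refine h1.congr_deriv ?_
    show (1 - c) / c * ((c / (1 - c)) * g r * r + ρh r * 1) = (1 - c) / c * ((c / (1 - c)) * g r * r + ρh r)
    ring
  have hF'c : ContinuousOn F' (Ioi 0) := by
    refine continuousOn_const.mul (ContinuousOn.add ?_ hρcOn)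
    exact (continuousOn_const.mul hgc).mul continuousOn_id
  have hFRm : F Rminus = 0 := by simp [hFdef, hRmzero]
  have hFRp : F Rplus = 0 := by simp [hFdef, hρRplus]
  -- Lipschitz bound on [Rminus, Rplus]
  have hsubIcc : Icc Rminus Rplus ⊆ Ioi 0 := fun x hx => lt_of_lt_of_le hRm0 hx.1
  obtain ⟨x0, hx0, hmax⟩ := (isCompact_Icc (a := Rminus) (b := Rplus)).exists_isMaxOn
    ⟨Rminus, left_mem_Icc.2 hminusplus.le⟩ ((hF'c.mono hsubIcc).norm)
  set L := ‖F' x0‖ + 1 with hLdef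
  have hL : 0 < L := by positivity
  have hbound : ∀ x ∈ Icc Rminus Rplus, ‖F' x‖ ≤ L := fun x hx => by
    have := hmax hx
    simp only [Set.mem_setOf_eq] at this
    linarith
  have hlip : LipschitzOnWith ⟨L, hL.le⟩ F (Icc Rminus Rplus) := by
    refine Convex.lipschitzOnWith_of_nnnorm_hasDerivWithin_le (convex_Icc Rminus Rplus)
      (fun x hx => (hFd x (hsubIcc hx)).hasDerivWithinAt) (fun x hx => ?_)
    show (‖F' x‖₊ : ℝ) ≤ L
    rw [coe_nnnorm]
    exact hbound x hx
  have hFla : ∀ r ∈ Ioo Rminus Rplus, F r ≤ L * (r - Rminus) := by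
    intro r hr
    have h := hlip.dist_le_mul r (Ioo_subset_Icc_self hr) Rminus (left_mem_Icc.2 hminusplus.le)
    rw [Real.dist_eq, Real.dist_eq] at h
    have h2 : |r - Rminus| = r - Rminus := abs_of_pos (by linarith [hr.1])
    have h3 : F r ≤ |F r - F Rminus| := by
      rw [hFRm, sub_zero]; exact le_abs_self _
    calc F r ≤ |F r - F Rminus| := h3
      _ ≤ L * |r - Rminus| := h
      _ = L * (r - Rminus) := by rw [h2]
  have hFlb : ∀ r ∈ Ioo Rminus Rplus, F r ≤ L * (Rplus - r) := by
    intro r hr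
    have h := hlip.dist_le_mul r (Ioo_subset_Icc_self hr) Rplus (right_mem_Icc.2 hminusplus.le)
    rw [Real.dist_eq, Real.dist_eq] at h
    have h2 : |r - Rplus| = Rplus - r := by
      rw [abs_sub_comm]; exact abs_of_pos (by linarith [hr.2])
    have h3 : F r ≤ |F r - F Rplus| := by
      rw [hFRp, sub_zero]; exact le_abs_self _
    calc F r ≤ |F r - F Rplus| := h3
      _ ≤ L * |r - Rplus| := h
      _ = L * (Rplus - r) := by rw [h2]
  -- apply the generic construction
  have hFc : ∀ r ∈ Ioo Rminus Rplus, ContinuousAt F r := fun r hr =>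
    (hFd r (lt_trans hRm0 hr.1)).continuousAt
  have hFpos : ∀ r ∈ Ioo Rminus Rplus, 0 < F r := fun r hr =>
    mul_pos (div_pos h1c hc0) (mul_pos (hρpos' r hr) (lt_trans hRm0 hr.1))
  obtain ⟨R, hRmem, hRd, hRc, hRbot, hRtop⟩ :=
    hetero Rminus Rplus hminusplus F hFc hFpos L hL hFla hFlb
  have hRpos : ∀ t, 0 < R t := fun t => lt_trans hRm0 (hRmem t).1
  have hρpos : ∀ t, 0 < ρh (R t) := fun t => hρpos' (R t) (hRmem t)
  -- derivative of ρ along the wave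
  have hρd : ∀ t : ℝ, HasDerivAt (fun t => ρh (R t)) (K (R t) * ρh (R t)) t := by
    intro t
    have h1 := (hρhd (R t) (hRpos t)).comp t (hRd t)
    have hrne : R t ≠ 0 := (hRpos t).ne'
    have h2 : (c / (1 - c)) * g (R t) * F (R t) = K (R t) * ρh (R t) := by
      simp only [hgdef, hFdef]
      field_simp
    rw [← h2]
    exact h1
  have hρcont : Continuous (fun t => ρh (R t)) :=
    continuous_iff_continuousAt.2 fun t =>
      ((hρhd (R t) (hRpos t)).continuousAt).comp hRc.continuousAt
  refine ⟨Rminus, hRm0.le, hRmlt, R, (fun t => ρh (R t)), ?_, ?_, hρpos, hRpos, ?_, ?_, hRbot, ?_, hRtop, ?_⟩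
  · rw [contDiff_one_iff_deriv]
    refine ⟨fun t => (hRd t).differentiableAt, ?_⟩
    have heq : deriv R = fun t => F (R t) := funext fun t => (hRd t).deriv
    rw [heq]
    exact continuous_iff_continuousAt.2 fun t =>
      ((hFd (R t) (hRpos t)).continuousAt).comp hRc.continuousAt
  · rw [contDiff_one_iff_deriv]
    refine ⟨fun t => (hρd t).differentiableAt, ?_⟩
    have heq : deriv (fun t => ρh (R t)) = fun t => K (R t) * ρh (R t) :=
      funext fun t => (hρd t).deriv
    rw [heq]
    exact (hKcont.comp hRc).mul hρcont
  · intro t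
    rw [(hRd t).deriv]
    simp only [hFdef]
    ring
  · intro t
    rw [(hρd t).deriv]
  · have h := ((hρhd Rminus hRm0).continuousAt).tendsto.comp hRbot
    rw [hRmzero] at h
    exact h
  · have h := ((hρhd Rplus hRp0).continuousAt).tendsto.comp hRtop
    rw [hρRplus] at h
    exact h
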